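/- For every natural number n, A(n+1) · (2n)! · (2n+1)! = A(n) · n! · (3n+1)!, where A(m) = ∏_{i=0}^{m−1} (3i+1)!/(m+i)! is regarded as a rational number. -/

import Mathlib

/-- The alternating-sign-matrix counting product `A(m) = ∏_{i=0}^{m-1} (3i+1)!/(m+i)!`,
regarded as a rational number. -/
noncomputable def asmA (m : ℕ) : ℚ :=
  ∏ i ∈ Finset.range m, ((3 * i + 1).factorial : ℚ) / ((m + i).factorial : ℚ)

lemma asmA_aux (n : ℕ) :
    (∏ i ∈ Finset.range n, ((n + 1 + i).factorial : ℚ)) * (n.factorial : ℚ)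
      = (∏ i ∈ Finset.range n, ((n + i).factorial : ℚ)) * ((2 * n).factorial : ℚ) := by
  have h1 := Finset.prod_range_succ' (fun i => ((n + i).factorial : ℚ)) n
  have h2 := Finset.prod_range_succ (fun i => ((n + i).factorial : ℚ)) n
  have he : (∏ i ∈ Finset.range n, ((n + (i + 1)).factorial : ℚ))
      = ∏ i ∈ Finset.range n, ((n + 1 + i).factorial : ℚ) := by
    apply Finset.prod_congr rfl
    intro i _
    rw [show n + (i + 1) = n + 1 + i from by omega]
  simp only [Nat.add_zero] at h1 h2
  rw [h2, he, show n + n = 2 * n from by omega] at h1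
  exact h1.symm

/-- The recurrence `A(n+1)/A(n) = n!(3n+1)!/((2n)!(2n+1)!)` for the
alternating-sign matrix numbers, cleared of denominators. -/
theorem asmA_recurrence (n : ℕ) :
    asmA (n + 1) * ((2 * n).factorial : ℚ) * ((2 * n + 1).factorial : ℚ)
      = asmA n * (n.factorial : ℚ) * ((3 * n + 1).factorial : ℚ) := by
  have hsplit : ∀ m : ℕ, asmA m =
      (∏ i ∈ Finset.range m, ((3 * i + 1).factorial : ℚ)) /
        (∏ i ∈ Finset.range m, ((m + i).factorial : ℚ)) := by
    intro m
    rw [asmA, Finset.prod_div_distrib]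
  rw [hsplit, hsplit]
  have hnum : (∏ i ∈ Finset.range (n + 1), ((3 * i + 1).factorial : ℚ))
      = (∏ i ∈ Finset.range n, ((3 * i + 1).factorial : ℚ)) * ((3 * n + 1).factorial : ℚ) := by
    rw [Finset.prod_range_succ]
  have hden : (∏ i ∈ Finset.range (n + 1), ((n + 1 + i).factorial : ℚ))
      = (∏ i ∈ Finset.range n, ((n + 1 + i).factorial : ℚ)) * ((2 * n + 1).factorial : ℚ) := by
    rw [Finset.prod_range_succ, show n + 1 + n = 2 * n + 1 from by omega]
  rw [hnum, hden]
  have hne1 : (∏ i ∈ Finset.range n, ((n + 1 + i).factorial : ℚ)) ≠ 0 :=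
    Finset.prod_ne_zero_iff.2 fun i _ => Nat.cast_ne_zero.2 (Nat.factorial_ne_zero _)
  have hne2 : (∏ i ∈ Finset.range n, ((n + i).factorial : ℚ)) ≠ 0 :=
    Finset.prod_ne_zero_iff.2 fun i _ => Nat.cast_ne_zero.2 (Nat.factorial_ne_zero _)
  have hne3 : ((2 * n + 1).factorial : ℚ) ≠ 0 :=
    Nat.cast_ne_zero.2 (Nat.factorial_ne_zero _)
  have key := asmA_aux n
  field_simp
  linear_combination -key
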